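/- Let X and Y be co-absolute topological spaces, i.e., there exist a topological space Z and closed irreducible continuous surjections θ_X : Z → X and θ_Y : Z → Y. If X is I-favorable, then Y is I-favorable. -/

import Mathlib

/-- A topological space `X` is I-favorable if there is a strategy `σ` assigning to each
finite (possibly empty) sequence of open subsets of `X` an open subset of `X` such that
whenever `B₀, B₁, …` are nonempty open sets with `B₀ ⊆ σ ∅` and `B_{k+1} ⊆ σ (B₀,…,B_k)`,
the union `⋃ k, B k` is dense in `X`. (For the empty space the nonemptiness requirement
on the values of `σ` is vacuous.) -/
def IFavorable (X : Type*) [TopologicalSpace X] : Prop :=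
  ∃ σ : List (Set X) → Set X,
    (∀ l, IsOpen (σ l)) ∧
    (∀ l, Nonempty X → (σ l).Nonempty) ∧
    ∀ B : ℕ → Set X, (∀ k, IsOpen (B k)) → (∀ k, (B k).Nonempty) →
      B 0 ⊆ σ [] →
      (∀ k, B (k + 1) ⊆ σ (List.ofFn fun i : Fin (k + 1) => B i)) →
      Dense (⋃ k, B k)

/-- `f : X → Y` is a closed irreducible continuous surjection: it is continuous, closed,
surjective, and `f '' F ≠ Y` for every proper closed subset `F ⊊ X`. -/
def ClosedIrreducibleSurjection {X Y : Type*} [TopologicalSpace X] [TopologicalSpace Y]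
    (f : X → Y) : Prop :=
  Continuous f ∧ IsClosedMap f ∧ Function.Surjective f ∧
    ∀ F : Set X, IsClosed F → F ≠ Set.univ → f '' F ≠ Set.univ

section Aux
variable {Z X : Type*} [TopologicalSpace Z] [TopologicalSpace X]

/-- Small image of a set under a map: points all of whose preimages lie in `U`. -/
def smIm (f : Z → X) (U : Set Z) : Set X := (f '' Uᶜ)ᶜ

lemma smIm_open {f : Z → X} (hf : IsClosedMap f) {U : Set Z} (hU : IsOpen U) :
    IsOpen (smIm f U) := (hf _ hU.isClosed_compl).isOpen_compl

lemma preimage_smIm (f : Z → X) (U : Set Z) : f ⁻¹' (smIm f U) ⊆ U := by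
  intro z hz
  by_contra hzU
  exact hz (Set.mem_image_of_mem f hzU)

lemma smIm_mono {f : Z → X} {U V : Set Z} (h : U ⊆ V) : smIm f U ⊆ smIm f V :=
  Set.compl_subset_compl.2 (Set.image_mono (f := f) (Set.compl_subset_compl.2 h))

lemma smIm_preimage_subset {f : Z → X} (hf : Function.Surjective f) (S : Set X) :
    smIm f (f ⁻¹' S) ⊆ S := by
  intro x hx
  obtain ⟨z, rfl⟩ := hf x
  by_contra hS
  exact hx ⟨z, hS, rfl⟩

lemma smIm_nonempty {f : Z → X} (hf : ClosedIrreducibleSurjection f) {U : Set Z}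
    (hU : IsOpen U) (hne : U.Nonempty) : (smIm f U).Nonempty := by
  rw [smIm, Set.nonempty_compl]
  refine hf.2.2.2 Uᶜ hU.isClosed_compl ?_
  intro hc
  have : U = ∅ := by
    have := congrArg compl hc
    simpa using this
  exact hne.ne_empty this

lemma dense_preimage_of_irreducible {f : Z → X} (hf : ClosedIrreducibleSurjection f)
    {W : Set X} (hW : Dense W) : Dense (f ⁻¹' W) := by
  by_contra hnd
  have hne : closure (f ⁻¹' W) ≠ Set.univ := by
    intro hc
    exact hnd (dense_iff_closure_eq.2 hc)
  have himg : f '' closure (f ⁻¹' W) ≠ Set.univ :=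
    hf.2.2.2 _ isClosed_closure hne
  apply himg
  have hWsub : W ⊆ f '' closure (f ⁻¹' W) := by
    intro x hx
    obtain ⟨z, rfl⟩ := hf.2.2.1 x
    exact ⟨z, subset_closure hx, rfl⟩
  have hcl : IsClosed (f '' closure (f ⁻¹' W)) := hf.2.1 _ isClosed_closure
  have := hcl.closure_subset_iff.2 hWsub
  rw [hW.closure_eq] at this
  exact Set.eq_univ_of_univ_subset this

end Aux

/-- If `X` and `Y` are co-absolute (there are a space `Z` and closed
irreducible continuous surjections `Z → X` and `Z → Y`) and `X` is I-favorable, then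
`Y` is I-favorable. -/
theorem ifavorable_of_coabsolute {X Y Z : Type*}
    [TopologicalSpace X] [TopologicalSpace Y] [TopologicalSpace Z]
    (θX : Z → X) (θY : Z → Y)
    (hX : ClosedIrreducibleSurjection θX) (hY : ClosedIrreducibleSurjection θY)
    (h : IFavorable X) : IFavorable Y := by
  obtain ⟨σ, hσopen, hσne, hσ⟩ := h
  refine ⟨fun l => smIm θY (θX ⁻¹' (σ (l.map fun B => smIm θX (θY ⁻¹' B)))), ?_, ?_, ?_⟩
  · intro l
    exact smIm_open hY.2.1 ((hσopen _).preimage hX.1)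
  · intro l hne
    obtain ⟨y⟩ := hne
    obtain ⟨z, rfl⟩ := hY.2.2.1 y
    have hXne : Nonempty X := ⟨θX z⟩
    refine smIm_nonempty hY ((hσopen _).preimage hX.1) ?_
    exact (hσne _ hXne).preimage hX.2.2.1
  · intro B hBopen hBne hB0 hBsucc
    set A : ℕ → Set X := fun k => smIm θX (θY ⁻¹' B k) with hA
    have hAopen : ∀ k, IsOpen (A k) := fun k => smIm_open hX.2.1 ((hBopen k).preimage hY.1)
    have hAne : ∀ k, (A k).Nonempty := fun k =>
      smIm_nonempty hX ((hBopen k).preimage hY.1) ((hBne k).preimage hY.2.2.1)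
    have hA0 : A 0 ⊆ σ [] := by
      have h1 : θY ⁻¹' (B 0) ⊆ θX ⁻¹' (σ []) :=
        (Set.preimage_mono hB0).trans (preimage_smIm θY _)
      exact (smIm_mono h1).trans (smIm_preimage_subset hX.2.2.1 _)
    have hAsucc : ∀ k, A (k + 1) ⊆ σ (List.ofFn fun i : Fin (k + 1) => A i) := by
      intro k
      have h1 : θY ⁻¹' (B (k + 1)) ⊆ θX ⁻¹'
          (σ ((List.ofFn fun i : Fin (k + 1) => B i).map fun B => smIm θX (θY ⁻¹' B))) :=
        (Set.preimage_mono (hBsucc k)).trans (preimage_smIm θY _)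
      have h2 := (smIm_mono h1).trans (smIm_preimage_subset hX.2.2.1 _)
      simpa [List.map_ofFn, Function.comp_def, hA] using h2
    have hdense : Dense (⋃ k, A k) := hσ A hAopen hAne hA0 hAsucc
    have hZdense : Dense (θX ⁻¹' ⋃ k, A k) := dense_preimage_of_irreducible hX hdense
    have hsub : θX ⁻¹' (⋃ k, A k) ⊆ ⋃ k, θY ⁻¹' (B k) := by
      rw [Set.preimage_iUnion]
      exact Set.iUnion_mono fun k => preimage_smIm θX _
    have hZdense' : Dense (⋃ k, θY ⁻¹' (B k)) := hZdense.mono hsub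
    have himg : Dense (θY '' ⋃ k, θY ⁻¹' (B k)) :=
      hY.2.2.1.denseRange.dense_image hY.1 hZdense'
    refine himg.mono ?_
    rw [Set.image_iUnion]
    exact Set.iUnion_mono fun k => Set.image_preimage_subset θY _
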